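/- (Lemma on Lipschitz bound for the heat kernel, part (b)) For every t > 0 and all y₁, y₂ ∈ ℝ^d, ‖y₁ K_t(y₁) - y₂ K_t(y₂)‖ ≤ ((e+2)/(e C_d(t))) ‖y₁ - y₂‖, where C_d(t) = (4πt)^{d/2}. -/

import Mathlib

open Real

local notation "⟪" x ", " y "⟫" => @inner ℝ _ _ x y

lemma aux_lip {E : Type*} [NormedAddCommGroup E] [InnerProductSpace ℝ E]
    (t : ℝ) (ht : 0 < t) (y₁ y₂ : E) :
    ‖Real.exp (-‖y₁‖ ^ 2 / (4 * t)) • y₁ - Real.exp (-‖y₂‖ ^ 2 / (4 * t)) • y₂‖ ≤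
      (2 * Real.exp (-(1/2 : ℝ))) * ‖y₁ - y₂‖ := by
  set c : ℝ := -(1 / (4 * t)) with hc
  have hFeq : ∀ y : E, Real.exp (-‖y‖ ^ 2 / (4 * t)) • y
      = Real.exp (⟪y, y⟫ * c) • y := by
    intro y
    rw [real_inner_self_eq_norm_sq, hc]
    congr 2; ring
  set F : E → E := fun y => Real.exp (⟪y, y⟫ * c) • y with hF
  set D : E → (E →L[ℝ] E) := fun y =>
    Real.exp (⟪y, y⟫ * c) •
        ContinuousLinearMap.id ℝ E +
      (Real.exp (⟪y, y⟫ * c) •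
        (c • ((fderivInnerCLM ℝ (y, y)).comp
          ((ContinuousLinearMap.id ℝ E).prod (ContinuousLinearMap.id ℝ E))))).smulRight y
    with hD
  have hderiv : ∀ y : E, HasFDerivAt F (D y) y := by
    intro y
    have h1 : HasFDerivAt (fun y : E => ⟪y, y⟫)
        ((fderivInnerCLM ℝ (y, y)).comp
          ((ContinuousLinearMap.id ℝ E).prod (ContinuousLinearMap.id ℝ E))) y :=
      (hasFDerivAt_id y).inner ℝ (hasFDerivAt_id y)
    have h2 : HasFDerivAt (fun y : E => ⟪y, y⟫ * c)
        (c • ((fderivInnerCLM ℝ (y, y)).comp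
          ((ContinuousLinearMap.id ℝ E).prod (ContinuousLinearMap.id ℝ E)))) y :=
      h1.mul_const c
    have h3 := h2.exp
    exact h3.smul (hasFDerivAt_id y)
  have hbound : ∀ y : E, ‖D y‖ ≤ 2 * Real.exp (-(1/2 : ℝ)) := by
    intro y
    apply ContinuousLinearMap.opNorm_le_bound
    · positivity
    intro h
    have happ : D y h = Real.exp (⟪y, y⟫ * c) • h +
        (Real.exp (⟪y, y⟫ * c) * (c * (⟪y, h⟫ + ⟪h, y⟫))) • y := by
      simp [hD, fderivInnerCLM_apply, smul_smul, mul_assoc]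
    have hyy : ⟪y, y⟫ = ‖y‖ ^ 2 := real_inner_self_eq_norm_sq y
    set s : ℝ := ‖y‖ ^ 2 / (2 * t) with hs
    have hs0 : 0 ≤ s := by positivity
    have harg : ⟪y, y⟫ * c = -(s/2) := by
      rw [hyy, hc, hs]
      field_simp
      ring
    rw [harg] at happ
    rw [happ]
    have hih : |⟪y, h⟫| ≤ ‖y‖ * ‖h‖ := abs_real_inner_le_norm y h
    have hb : ‖(Real.exp (-(s/2)) * (c * (⟪y, h⟫ + ⟪h, y⟫))) • y‖ ≤
        Real.exp (-(s/2)) * ((1/(4*t)) * (2 * (‖y‖ * ‖h‖))) * ‖y‖ := by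
      rw [norm_smul, Real.norm_eq_abs]
      gcongr ?_ * ‖y‖
      rw [abs_mul, abs_of_pos (Real.exp_pos _), abs_mul]
      gcongr
      · exact le_of_eq (by rw [hc, abs_neg, abs_of_pos (by positivity)])
      · have hsym : ⟪h, y⟫ = ⟪y, h⟫ := by
          rw [real_inner_comm]
        rw [hsym]
        calc |⟪y, h⟫ + ⟪y, h⟫| ≤ |⟪y, h⟫| + |⟪y, h⟫| := abs_add_le _ _
          _ ≤ 2 * (‖y‖ * ‖h‖) := by nlinarith
    calc ‖Real.exp (-(s/2)) • h +
        (Real.exp (-(s/2)) * (c * (⟪y, h⟫ + ⟪h, y⟫))) • y‖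
        ≤ ‖Real.exp (-(s/2)) • h‖ +
          ‖(Real.exp (-(s/2)) * (c * (⟪y, h⟫ + ⟪h, y⟫))) • y‖ := norm_add_le _ _
      _ ≤ Real.exp (-(s/2)) * ‖h‖ +
          Real.exp (-(s/2)) * ((1/(4*t)) * (2 * (‖y‖ * ‖h‖))) * ‖y‖ := by
          rw [norm_smul, Real.norm_eq_abs, abs_of_pos (Real.exp_pos _)]
          gcongr
      _ = Real.exp (-(s/2)) * (1 + s) * ‖h‖ := by
          rw [hs]; field_simp; ring
      _ ≤ (2 * Real.exp (-(1/2 : ℝ))) * ‖h‖ := by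
          gcongr ?_ * ‖h‖
          have key : 1 + s ≤ 2 * Real.exp ((s - 1)/2) := by
            have := Real.add_one_le_exp ((s - 1)/2)
            linarith
          calc Real.exp (-(s/2)) * (1 + s)
              ≤ Real.exp (-(s/2)) * (2 * Real.exp ((s - 1)/2)) := by gcongr
            _ = 2 * (Real.exp (-(s/2)) * Real.exp ((s - 1)/2)) := by ring
            _ = 2 * Real.exp (-(1/2 : ℝ)) := by rw [← Real.exp_add]; congr 1; ring
  have key := convex_univ.norm_image_sub_le_of_norm_hasFDerivWithin_le (𝕜 := ℝ)
    (f := F) (f' := D) (s := Set.univ)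
    (fun x _ => (hderiv x).hasFDerivWithinAt)
    (fun x _ => hbound x) (Set.mem_univ y₂) (Set.mem_univ y₁)
  rw [hFeq y₁, hFeq y₂]
  exact key

/-- The heat kernel centered at zero, `K_t(y) = (4πt)^{-d/2} exp(-‖y‖²/(4t))`. -/
noncomputable def heatKernel0 (d : ℕ) (t : ℝ) (y : EuclideanSpace ℝ (Fin d)) : ℝ :=
  ((4 * Real.pi * t) ^ ((d : ℝ) / 2))⁻¹ * Real.exp (-‖y‖ ^ 2 / (4 * t))

/-- Lipschitz bound for `y ↦ y K_t(y)`: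
`‖y₁ K_t(y₁) - y₂ K_t(y₂)‖ ≤ ((e+2)/(e C_d(t))) ‖y₁ - y₂‖`. -/
theorem heatKernel_vec_lipschitz (d : ℕ) (t : ℝ) (ht : 0 < t)
    (y₁ y₂ : EuclideanSpace ℝ (Fin d)) :
    ‖heatKernel0 d t y₁ • y₁ - heatKernel0 d t y₂ • y₂‖ ≤
      (Real.exp 1 + 2) / (Real.exp 1 * (4 * Real.pi * t) ^ ((d : ℝ) / 2)) * ‖y₁ - y₂‖ := by
  have hCpos : 0 < (4 * Real.pi * t) ^ ((d : ℝ) / 2) :=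
    Real.rpow_pos_of_pos (by positivity) _
  set C : ℝ := (4 * Real.pi * t) ^ ((d : ℝ) / 2) with hC
  have h1 : ∀ y : EuclideanSpace ℝ (Fin d),
      heatKernel0 d t y • y = C⁻¹ • (Real.exp (-‖y‖ ^ 2 / (4 * t)) • y) := by
    intro y
    rw [heatKernel0, smul_smul]
  rw [h1, h1, ← smul_sub, norm_smul, Real.norm_eq_abs, abs_of_pos (by positivity)]
  have hlip := aux_lip t ht y₁ y₂
  have hkey : 2 * Real.exp (-(1/2 : ℝ)) ≤ (Real.exp 1 + 2) / Real.exp 1 := by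
    rw [le_div_iff₀ (Real.exp_pos 1)]
    have h2 : Real.exp (-(1/2 : ℝ)) * Real.exp 1 = Real.exp (1/2 : ℝ) := by
      rw [← Real.exp_add]; norm_num
    have h3 : Real.exp (1/2 : ℝ) * Real.exp (1/2 : ℝ) = Real.exp 1 := by
      rw [← Real.exp_add]; norm_num
    nlinarith [sq_nonneg (Real.exp (1/2 : ℝ) - 1)]
  have hform : (Real.exp 1 + 2) / (Real.exp 1 * C) =
      C⁻¹ * ((Real.exp 1 + 2) / Real.exp 1) := by
    rw [div_mul_eq_div_div, div_eq_mul_inv, mul_comm]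
  rw [hform]
  calc C⁻¹ * ‖Real.exp (-‖y₁‖ ^ 2 / (4 * t)) • y₁ - Real.exp (-‖y₂‖ ^ 2 / (4 * t)) • y₂‖
      ≤ C⁻¹ * ((2 * Real.exp (-(1/2 : ℝ))) * ‖y₁ - y₂‖) := by gcongr
    _ ≤ C⁻¹ * ((Real.exp 1 + 2) / Real.exp 1) * ‖y₁ - y₂‖ := by
        have h5 : 2 * Real.exp (-(1/2 : ℝ)) * ‖y₁ - y₂‖ ≤
            (Real.exp 1 + 2) / Real.exp 1 * ‖y₁ - y₂‖ :=
          mul_le_mul_of_nonneg_right hkey (norm_nonneg (y₁ - y₂))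
        have hC0 : (0:ℝ) ≤ C⁻¹ := by positivity
        nlinarith [mul_le_mul_of_nonneg_left h5 hC0]
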